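/- Define B ⊂ (0,1) as the union of the open intervals (1/3^{k+1}, 2/3^{k+1}) for k ≥ 1, the interval (1/3, 2/3), and the intervals ((3^{k+1}−2)/3^{k+1}, (3^{k+1}−1)/3^{k+1}) for k ≥ 1. Define D_0 := [2/3, 1] and inductively D_n := D_{n−1} \ ⋃_{I ∈ E(D_{n−1})} A_I(B), where E(S) is the set of connected components of S with nonempty interior and A_I is the orientation-preserving affine bijection [0,1] → I. Then ⋂_{n≥0} D_n = K ∩ [2/3,1], where K is the middle-third Cantor set. -/

import Mathlib

open Set MeasureTheory

noncomputable def cantorK : Set ℝ :=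
  {x | ∃ α : ℕ → ℝ, (∀ k, α k = 0 ∨ α k = 2) ∧ x = ∑' k : ℕ, α k / 3 ^ (k + 1)}

def Pset (E F : Set ℝ) : Set ℝ := Set.image2 (· * ·) E F

/-- Orientation-preserving affine bijection from `[0,1]` onto the interval `I`. -/
noncomputable def affI (I : Set ℝ) (x : ℝ) : ℝ := sInf I + (sSup I - sInf I) * x

/-- The family of connected components of `S` with nonempty interior. -/
def compsE (S : Set ℝ) : Set (Set ℝ) :=
  {I | (∃ x ∈ S, I = connectedComponentIn S x) ∧ (interior I).Nonempty}

/-- The union `B` of gaps removed from `[0,1]` in the fast subdivision. -/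
noncomputable def gapB : Set ℝ :=
  (⋃ k : ℕ, Ioo ((1:ℝ)/3^(k+2)) (2/3^(k+2))) ∪ Ioo (1/3) (2/3) ∪
  ⋃ k : ℕ, Ioo (((3:ℝ)^(k+2) - 2)/3^(k+2)) ((3^(k+2) - 1)/3^(k+2))

/-- The fast subdivision of `[2/3, 1]`. -/
noncomputable def fastD : ℕ → Set ℝ
  | 0 => Icc (2/3) 1
  | n + 1 => fastD n \ ⋃ I ∈ compsE (fastD n), affI I '' gapB


namespace CW


lemma summable_digits {α : ℕ → ℝ} (h : ∀ k, α k = 0 ∨ α k = 2) :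
    Summable (fun k => α k / 3 ^ (k+1)) := by
  refine Summable.of_nonneg_of_le (fun k => ?_) (fun k => ?_)
    (((summable_geometric_of_lt_one (by norm_num) (by norm_num)).mul_left 2) :
      Summable (fun k => 2 * (1/3:ℝ)^k))
  · rcases h k with h|h <;> rw [h] <;> positivity
  · have hle : α k ≤ 2 := by rcases h k with h|h <;> rw [h] <;> norm_num
    have h3 : (0:ℝ) < 3 ^ (k+1) := by positivity
    have h1 : α k / 3 ^ (k+1) ≤ 2 / 3 ^ (k+1) := by gcongr
    refine h1.trans ?_
    have : ((1:ℝ)/3) ^ (k+1) ≤ (1/3)^k := pow_le_pow_of_le_one (by norm_num) (by norm_num) (by omega)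
    rw [one_div_pow] at this
    rw [div_eq_mul_inv, ← one_div]
    nlinarith
lemma tsum_two_thirds : ∑' k : ℕ, (2:ℝ) / 3 ^ (k+1) = 1 := by
  have : (fun k : ℕ => (2:ℝ) / 3 ^ (k+1)) = fun k : ℕ => (2/3) * (1/3:ℝ)^k := by
    funext k; rw [pow_succ, one_div_pow]; field_simp
  rw [this, tsum_mul_left, tsum_geometric_of_lt_one (by norm_num) (by norm_num)]
  norm_num

lemma tsum_digits_nonneg {α : ℕ → ℝ} (h : ∀ k, α k = 0 ∨ α k = 2) :
    0 ≤ ∑' k : ℕ, α k / 3 ^ (k+1) :=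
  tsum_nonneg (fun k => by rcases h k with h|h <;> rw [h] <;> positivity)

lemma tsum_digits_le_one {α : ℕ → ℝ} (h : ∀ k, α k = 0 ∨ α k = 2) :
    ∑' k : ℕ, α k / 3 ^ (k+1) ≤ 1 := by
  rw [← tsum_two_thirds]
  refine Summable.tsum_le_tsum (fun k => ?_) (summable_digits h) (summable_digits (fun k => Or.inr rfl))
  have h3 : (0:ℝ) < 3 ^ (k+1) := by positivity
  have hle : α k ≤ 2 := by rcases h k with h|h <;> rw [h] <;> norm_num
  gcongr

lemma cantorK_sub : cantorK ⊆ Icc 0 1 := by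
  rintro x ⟨α, hα, rfl⟩
  exact ⟨tsum_digits_nonneg hα, tsum_digits_le_one hα⟩

lemma zero_mem : (0:ℝ) ∈ cantorK :=
  ⟨fun _ => 0, fun _ => Or.inl rfl, by simp⟩

lemma one_mem : (1:ℝ) ∈ cantorK :=
  ⟨fun _ => 2, fun _ => Or.inr rfl, tsum_two_thirds.symm⟩

lemma tsum_shift {α : ℕ → ℝ} (h : ∀ k, α k = 0 ∨ α k = 2) :
    ∑' k : ℕ, α k / 3 ^ (k+1) = α 0 / 3 + (1/3) * ∑' k : ℕ, α (k+1) / 3 ^ (k+1) := by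
  rw [Summable.tsum_eq_zero_add (summable_digits h)]
  congr 1
  · norm_num
  · rw [← tsum_mul_left]
    congr 1; funext k
    rw [pow_succ]
    ring

lemma mem_third {x : ℝ} (h : x ∈ cantorK) : x/3 ∈ cantorK := by
  obtain ⟨α, hα, rfl⟩ := h
  have hd : ∀ k : ℕ, (if k = 0 then (0:ℝ) else α (k-1)) = 0 ∨ (if k = 0 then (0:ℝ) else α (k-1)) = 2 :=
    fun k => by by_cases h : k = 0 <;> simp [h, hα]
  refine ⟨fun k => if k = 0 then (0:ℝ) else α (k-1), hd, ?_⟩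
  rw [tsum_shift hd]
  simp only [if_pos rfl]
  have : (fun k : ℕ => (if k + 1 = 0 then (0:ℝ) else α (k+1-1)) / 3 ^ (k+1)) =
      fun k : ℕ => α k / 3 ^ (k+1) := by funext k; simp
  rw [this]
  norm_num
  ring

lemma mem_third' {x : ℝ} (h : x ∈ cantorK) : 2/3 + x/3 ∈ cantorK := by
  obtain ⟨α, hα, rfl⟩ := h
  have hd : ∀ k : ℕ, (if k = 0 then (2:ℝ) else α (k-1)) = 0 ∨ (if k = 0 then (2:ℝ) else α (k-1)) = 2 :=
    fun k => by by_cases h : k = 0 <;> simp [h, hα]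
  refine ⟨fun k => if k = 0 then (2:ℝ) else α (k-1), hd, ?_⟩
  rw [tsum_shift hd]
  simp only [if_pos rfl]
  have : (fun k : ℕ => (if k + 1 = 0 then (2:ℝ) else α (k+1-1)) / 3 ^ (k+1)) =
      fun k : ℕ => α k / 3 ^ (k+1) := by funext k; simp
  rw [this]
  norm_num
  ring

lemma cantor_split {x : ℝ} (h : x ∈ cantorK) :
    (∃ y ∈ cantorK, x = y/3) ∨ (∃ y ∈ cantorK, x = 2/3 + y/3) := by
  obtain ⟨α, hα, rfl⟩ := h
  have hy : (∑' k : ℕ, α (k+1) / 3 ^ (k+1)) ∈ cantorK := ⟨fun k => α (k+1), fun k => hα _, rfl⟩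
  rcases hα 0 with h0|h0
  · exact Or.inl ⟨_, hy, by rw [tsum_shift hα, h0]; ring⟩
  · exact Or.inr ⟨_, hy, by rw [tsum_shift hα, h0]; ring⟩

lemma cantor_left {x : ℝ} (h : x ∈ cantorK) (hx : x ≤ 1/3) : ∃ y ∈ cantorK, x = y/3 := by
  rcases cantor_split h with h'|⟨y, hy, rfl⟩
  · exact h'
  · have := (cantorK_sub hy).1; linarith

lemma cantor_right {x : ℝ} (h : x ∈ cantorK) (hx : 2/3 ≤ x) : ∃ y ∈ cantorK, x = 2/3 + y/3 := by
  rcases cantor_split h with ⟨y, hy, rfl⟩|h'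
  · have := (cantorK_sub hy).2; linarith
  · exact h'

lemma cantorK_closed : IsClosed cantorK := by
  have hf : Continuous (fun β : ℕ → Bool => ∑' k : ℕ, (cond (β k) (2:ℝ) 0) / 3 ^ (k+1)) := by
    refine continuous_tsum (u := fun k => 2 * (1/3:ℝ)^k) (fun k => ?_) ?_ (fun k β => ?_)
    · exact ((continuous_of_discreteTopology (f := fun b : Bool => cond b (2:ℝ) 0)).comp (continuous_apply k)).div_const _
    · exact (summable_geometric_of_lt_one (by norm_num) (by norm_num)).mul_left 2
    · have h3 : (0:ℝ) < 3 ^ (k+1) := by positivity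
      have hle : cond (β k) (2:ℝ) 0 ≤ 2 := by cases β k <;> norm_num
      have hge : (0:ℝ) ≤ cond (β k) (2:ℝ) 0 := by cases β k <;> norm_num
      rw [Real.norm_eq_abs, abs_of_nonneg (by positivity)]
      have h1 : cond (β k) (2:ℝ) 0 / 3 ^ (k+1) ≤ 2 / 3 ^ (k+1) := by gcongr
      refine h1.trans ?_
      have : ((1:ℝ)/3) ^ (k+1) ≤ (1/3)^k := pow_le_pow_of_le_one (by norm_num) (by norm_num) (by omega)
      rw [one_div_pow] at this
      rw [div_eq_mul_inv, ← one_div]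
      nlinarith
  have : cantorK = Set.range (fun β : ℕ → Bool => ∑' k : ℕ, (cond (β k) (2:ℝ) 0) / 3 ^ (k+1)) := by
    ext x
    constructor
    · rintro ⟨α, hα, rfl⟩
      refine ⟨fun k => decide (α k = 2), ?_⟩
      show ∑' k : ℕ, (cond (decide (α k = 2)) (2:ℝ) 0) / 3 ^ (k+1) = _
      exact tsum_congr fun k => by rcases hα k with h|h <;> simp [h]
    · rintro ⟨β, rfl⟩
      exact ⟨fun k => cond (β k) 2 0, fun k => by rcases Bool.dichotomy (β k) with h|h <;> simp [h], rfl⟩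
  rw [this]
  exact (isCompact_range hf).isClosed


inductive GP : ℕ → ℝ → Prop
  | zero : GP 0 0
  | d0 {s a} : GP s a → GP (s+1) (a/3)
  | d2 {s a} : GP s a → GP (s+1) (2/3 + a/3)

lemma GP.bounds {s : ℕ} {a : ℝ} (h : GP s a) : 0 ≤ a ∧ a + (1/3:ℝ)^s ≤ 1 := by
  induction h with
  | zero => norm_num
  | d0 h ih => obtain ⟨h1, h2⟩ := ih; constructor
               · linarith
               · rw [pow_succ]; linarith
  | d2 h ih => obtain ⟨h1, h2⟩ := ih; constructor
               · linarith
               · rw [pow_succ]; linarith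

lemma GP.interval {s : ℕ} {a : ℝ} (h : GP s a) :
    cantorK ∩ Icc a (a + (1/3:ℝ)^s) = (fun x => a + (1/3:ℝ)^s * x) '' cantorK := by
  induction h with
  | zero =>
    rw [pow_zero]
    have h1 : cantorK ∩ Icc 0 (0 + 1) = cantorK := by
      rw [zero_add]; exact inter_eq_self_of_subset_left cantorK_sub
    rw [h1]
    ext x; simp
  | @d0 s a h ih =>
    obtain ⟨hb1, hb2⟩ := h.bounds
    have hts : (0:ℝ) < (1/3:ℝ)^s := by positivity
    ext x
    constructor
    · rintro ⟨hK, hx1, hx2⟩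
      have hx3 : x ≤ 1/3 := by rw [pow_succ] at hx2; linarith
      obtain ⟨y, hy, rfl⟩ := cantor_left hK hx3
      have hy1 : y ∈ Icc a (a + (1/3:ℝ)^s) := by
        constructor
        · linarith
        · rw [pow_succ] at hx2; linarith
      have : y ∈ (fun x => a + (1/3:ℝ)^s * x) '' cantorK := by rw [← ih]; exact ⟨hy, hy1⟩
      obtain ⟨z, hz, rfl⟩ := this
      exact ⟨z, hz, by rw [pow_succ]; ring⟩
    · rintro ⟨z, hz, rfl⟩
      obtain ⟨hz0, hz1⟩ := cantorK_sub hz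
      have hyK : (a + (1/3:ℝ)^s * z) ∈ cantorK ∩ Icc a (a + (1/3:ℝ)^s) := by
        rw [ih]; exact ⟨z, hz, rfl⟩
      refine ⟨?_, ?_, ?_⟩
      · have := mem_third hyK.1
        convert this using 1
        rw [pow_succ]; ring
      · rw [pow_succ]; nlinarith
      · rw [pow_succ]; nlinarith
  | @d2 s a h ih =>
    obtain ⟨hb1, hb2⟩ := h.bounds
    have hts : (0:ℝ) < (1/3:ℝ)^s := by positivity
    ext x
    constructor
    · rintro ⟨hK, hx1, hx2⟩
      have hx3 : 2/3 ≤ x := by linarith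
      obtain ⟨y, hy, rfl⟩ := cantor_right hK hx3
      have hy1 : y ∈ Icc a (a + (1/3:ℝ)^s) := by
        constructor
        · linarith
        · rw [pow_succ] at hx2; linarith
      have : y ∈ (fun x => a + (1/3:ℝ)^s * x) '' cantorK := by rw [← ih]; exact ⟨hy, hy1⟩
      obtain ⟨z, hz, rfl⟩ := this
      exact ⟨z, hz, by rw [pow_succ]; ring⟩
    · rintro ⟨z, hz, rfl⟩
      obtain ⟨hz0, hz1⟩ := cantorK_sub hz
      have hyK : (a + (1/3:ℝ)^s * z) ∈ cantorK ∩ Icc a (a + (1/3:ℝ)^s) := by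
        rw [ih]; exact ⟨z, hz, rfl⟩
      refine ⟨?_, ?_, ?_⟩
      · have := mem_third' hyK.1
        convert this using 1
        rw [pow_succ]; ring
      · rw [pow_succ]; nlinarith
      · rw [pow_succ]; nlinarith

lemma GP.left_mem {s : ℕ} {a : ℝ} (h : GP s a) : a ∈ cantorK := by
  have : a ∈ cantorK ∩ Icc a (a + (1/3:ℝ)^s) := by
    rw [h.interval]; exact ⟨0, zero_mem, by simp⟩
  exact this.1

lemma GP.right_mem {s : ℕ} {a : ℝ} (h : GP s a) : a + (1/3:ℝ)^s ∈ cantorK := by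
  have : a + (1/3:ℝ)^s ∈ cantorK ∩ Icc a (a + (1/3:ℝ)^s) := by
    rw [h.interval]; exact ⟨1, one_mem, by simp⟩
  exact this.1

lemma GP.app0 {s : ℕ} {a : ℝ} (h : GP s a) : GP (s+1) a := by
  induction h with
  | zero => have := GP.d0 GP.zero; norm_num at this; exact this
  | d0 h ih => exact ih.d0
  | d2 h ih => exact ih.d2

lemma GP.app2 {s : ℕ} {a : ℝ} (h : GP s a) : GP (s+1) (a + 2*(1/3:ℝ)^(s+1)) := by
  induction h with
  | zero =>
    have : (0:ℝ) + 2*(1/3:ℝ)^(0+1) = 2/3 + 0/3 := by norm_num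
    rw [this]; exact GP.d2 GP.zero
  | @d0 s a h ih =>
    have : a/3 + 2*(1/3:ℝ)^(s+1+1) = (a + 2*(1/3:ℝ)^(s+1))/3 := by rw [pow_succ]; ring
    rw [this]; exact ih.d0
  | @d2 s a h ih =>
    have : 2/3 + a/3 + 2*(1/3:ℝ)^(s+1+1) = 2/3 + (a + 2*(1/3:ℝ)^(s+1))/3 := by rw [pow_succ]; ring
    rw [this]; exact ih.d2

lemma GP.appzeros {s : ℕ} {a : ℝ} (h : GP s a) (t : ℕ) : GP (s+t) a := by
  induction t with
  | zero => exact h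
  | succ t ih => exact ih.app0

lemma GP.apptwos {s : ℕ} {a : ℝ} (h : GP s a) (t : ℕ) :
    GP (s+t) (a + (1/3:ℝ)^s - (1/3:ℝ)^(s+t)) := by
  induction t with
  | zero => simpa using h
  | succ t ih =>
    have h2 := ih.app2
    have : a + (1/3:ℝ)^s - (1/3:ℝ)^(s+t) + 2*(1/3:ℝ)^(s+t+1)
        = a + (1/3:ℝ)^s - (1/3:ℝ)^(s+(t+1)) := by
      rw [show s+(t+1) = (s+t)+1 from rfl, pow_succ]; ring
    rw [this] at h2
    exact h2

lemma not_left_gap {x : ℝ} (hx : x ∈ cantorK) :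
    ∀ j : ℕ, 1 ≤ j → ¬ ((1/3:ℝ)^j < x ∧ x < 2*(1/3:ℝ)^j) := by
  intro j hj
  induction j, hj using Nat.le_induction generalizing x with
  | base =>
    rintro ⟨h1, h2⟩
    norm_num at h1 h2
    rcases cantor_split hx with ⟨y, hy, rfl⟩|⟨y, hy, rfl⟩
    · have := (cantorK_sub hy).2; linarith
    · have := (cantorK_sub hy).1; linarith
  | succ j hj ih =>
    rintro ⟨h1, h2⟩
    have hp : ((1:ℝ)/3)^(j+1) ≤ (1/3:ℝ)^2 := pow_le_pow_of_le_one (by norm_num) (by norm_num) (by omega)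
    have hx3 : x ≤ 1/3 := by norm_num at hp; linarith
    obtain ⟨y, hy, rfl⟩ := cantor_left hx hx3
    refine ih hy ⟨?_, ?_⟩ <;> rw [pow_succ] at h1 h2 <;> linarith

lemma not_right_gap {x : ℝ} (hx : x ∈ cantorK) :
    ∀ j : ℕ, 1 ≤ j → ¬ (1 - 2*(1/3:ℝ)^j < x ∧ x < 1 - (1/3:ℝ)^j) := by
  intro j hj
  induction j, hj using Nat.le_induction generalizing x with
  | base =>
    rintro ⟨h1, h2⟩
    norm_num at h1 h2
    rcases cantor_split hx with ⟨y, hy, rfl⟩|⟨y, hy, rfl⟩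
    · have := (cantorK_sub hy).2; linarith
    · have := (cantorK_sub hy).1; linarith
  | succ j hj ih =>
    rintro ⟨h1, h2⟩
    have hp : ((1:ℝ)/3)^(j+1) ≤ (1/3:ℝ)^2 := pow_le_pow_of_le_one (by norm_num) (by norm_num) (by omega)
    have hx3 : 2/3 ≤ x := by norm_num at hp; linarith
    obtain ⟨y, hy, rfl⟩ := cantor_right hx hx3
    refine ih hy ⟨?_, ?_⟩ <;> rw [pow_succ] at h1 h2 <;> linarith



lemma pow3 (m : ℕ) : (1/3:ℝ)^(m+1) = 3*(1/3:ℝ)^(m+2) := by rw [pow_succ]; ring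

lemma pow3_le {m n : ℕ} (h : m ≤ n) : (1/3:ℝ)^n ≤ (1/3:ℝ)^m :=
  pow_le_pow_of_le_one (by norm_num) (by norm_num) h

lemma gapB_eq : gapB = (⋃ k : ℕ, Ioo ((1/3:ℝ)^(k+2)) (2*(1/3:ℝ)^(k+2))) ∪ Ioo (1/3) (2/3) ∪
    ⋃ k : ℕ, Ioo (1-2*(1/3:ℝ)^(k+2)) (1-(1/3:ℝ)^(k+2)) := by
  have e : ∀ k : ℕ, Ioo ((1:ℝ)/3^(k+2)) (2/3^(k+2)) = Ioo ((1/3:ℝ)^(k+2)) (2*(1/3:ℝ)^(k+2)) := by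
    intro k; rw [one_div_pow, mul_one_div]
  have e' : ∀ k : ℕ, Ioo (((3:ℝ)^(k+2) - 2)/3^(k+2)) ((3^(k+2) - 1)/3^(k+2))
      = Ioo (1-2*(1/3:ℝ)^(k+2)) (1-(1/3:ℝ)^(k+2)) := by
    intro k
    have h3 : (3:ℝ)^(k+2) ≠ 0 := by positivity
    congr 1 <;> rw [one_div_pow] <;> field_simp
  unfold gapB
  rw [iUnion_congr e, iUnion_congr e']

lemma gapB_left {j : ℕ} (hj : 1 ≤ j) : Ioo ((1/3:ℝ)^j) (2*(1/3:ℝ)^j) ⊆ gapB := by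
  rw [gapB_eq]
  match j, hj with
  | 1, _ => intro x hx; exact Or.inl (Or.inr (by norm_num at hx ⊢; exact hx))
  | (k+2), _ => intro x hx; exact Or.inl (Or.inl (mem_iUnion.2 ⟨k, hx⟩))

lemma gapB_right {j : ℕ} (hj : 1 ≤ j) : Ioo (1-2*(1/3:ℝ)^j) (1-(1/3:ℝ)^j) ⊆ gapB := by
  rw [gapB_eq]
  match j, hj with
  | 1, _ => intro x hx; exact Or.inl (Or.inr (by norm_num at hx ⊢; exact ⟨hx.1, hx.2⟩))
  | (k+2), _ => intro x hx; exact Or.inr (mem_iUnion.2 ⟨k, hx⟩)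

lemma gapB_sub : gapB ⊆ Ioo 0 1 := by
  rw [gapB_eq]
  rintro x ((h|h)|h)
  · obtain ⟨k, hk⟩ := mem_iUnion.1 h
    have h1 : (0:ℝ) < (1/3:ℝ)^(k+2) := by positivity
    have h2 : ((1:ℝ)/3)^(k+2) ≤ (1/3:ℝ)^2 := pow3_le (by omega)
    obtain ⟨ha, hb⟩ := hk
    norm_num at h2
    constructor <;> linarith
  · obtain ⟨ha, hb⟩ := h; constructor <;> linarith
  · obtain ⟨k, hk⟩ := mem_iUnion.1 h
    have h1 : (0:ℝ) < (1/3:ℝ)^(k+2) := by positivity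
    have h2 : ((1:ℝ)/3)^(k+2) ≤ (1/3:ℝ)^2 := pow3_le (by omega)
    obtain ⟨ha, hb⟩ := hk
    norm_num at h2
    constructor <;> linarith

/-- left kept intervals of `[0,1] \ B` -/
def leftI (m : ℕ) : Set ℝ := Icc (2*(1/3:ℝ)^(m+2)) (3*(1/3:ℝ)^(m+2))
def rightI (m : ℕ) : Set ℝ := Icc (1-3*(1/3:ℝ)^(m+2)) (1-2*(1/3:ℝ)^(m+2))

lemma unit_decomp : Icc (0:ℝ) 1 \ gapB = {0,1} ∪ ⋃ m : ℕ, (leftI m ∪ rightI m) := by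
  ext x
  constructor
  · rintro ⟨⟨h0, h1⟩, hB⟩
    rw [gapB_eq] at hB
    by_cases hx0 : x = 0
    · exact Or.inl (Or.inl hx0)
    by_cases hx1 : x = 1
    · exact Or.inl (Or.inr hx1)
    have hx0' : 0 < x := lt_of_le_of_ne h0 (Ne.symm hx0)
    have hx1' : x < 1 := lt_of_le_of_ne h1 hx1
    have hmid : ¬((1:ℝ)/3 < x ∧ x < 2/3) := fun h => hB (Or.inl (Or.inr h))
    refine Or.inr ?_
    rcases le_or_gt x (1/3) with hle | hgt
    · obtain ⟨n, hn⟩ := exists_pow_lt_of_lt_one hx0' (show (1/3:ℝ) < 1 by norm_num)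
      have hP : ∃ k, (1/3:ℝ)^(k+2) < x := ⟨n, lt_of_le_of_lt (pow3_le (by omega)) hn⟩
      have hm : (1/3:ℝ)^(Nat.find hP+2) < x := Nat.find_spec hP
      set m := Nat.find hP with hmdef
      have hup : x ≤ (1/3:ℝ)^(m+1) := by
        rcases Nat.eq_zero_or_pos m with h|h
        · rw [h]; norm_num; linarith
        · have h2 := Nat.find_min hP (show m-1 < m by omega)
          push_neg at h2
          have : m - 1 + 2 = m + 1 := by omega
          rwa [this] at h2
      have hnotgap : ¬((1/3:ℝ)^(m+2) < x ∧ x < 2*(1/3:ℝ)^(m+2)) :=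
        fun h => hB (Or.inl (Or.inl (mem_iUnion.2 ⟨m, h⟩)))
      push_neg at hnotgap
      refine mem_iUnion.2 ⟨m, Or.inl ⟨hnotgap hm, ?_⟩⟩
      have := pow3 m
      linarith
    · have hge : 2/3 ≤ x := by
        by_contra hc
        push_neg at hc
        exact hmid ⟨hgt, hc⟩
      obtain ⟨n, hn⟩ := exists_pow_lt_of_lt_one (show (0:ℝ) < 1 - x by linarith)
        (show (1/3:ℝ) < 1 by norm_num)
      have hP : ∃ k, (1/3:ℝ)^(k+2) < 1 - x := ⟨n, lt_of_le_of_lt (pow3_le (by omega)) hn⟩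
      have hm : (1/3:ℝ)^(Nat.find hP+2) < 1 - x := Nat.find_spec hP
      set m := Nat.find hP with hmdef
      have hup : 1 - x ≤ (1/3:ℝ)^(m+1) := by
        rcases Nat.eq_zero_or_pos m with h|h
        · rw [h]; norm_num; linarith
        · have h2 := Nat.find_min hP (show m-1 < m by omega)
          push_neg at h2
          have : m - 1 + 2 = m + 1 := by omega
          rwa [this] at h2
      have hnotgap : ¬(1-2*(1/3:ℝ)^(m+2) < x ∧ x < 1-(1/3:ℝ)^(m+2)) :=
        fun h => hB (Or.inr (mem_iUnion.2 ⟨m, h⟩))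
      push_neg at hnotgap
      have hx2 : x ≤ 1 - 2*(1/3:ℝ)^(m+2) := by
        by_contra hc
        push_neg at hc
        have := hnotgap hc
        linarith
      refine mem_iUnion.2 ⟨m, Or.inr ⟨?_, hx2⟩⟩
      have := pow3 m
      linarith
  · intro hx
    have hB01 := gapB_sub
    rcases hx with (h|h) | h
    · rw [h]; exact ⟨by norm_num, fun hc => by have := (hB01 hc).1; norm_num at this⟩
    · rw [mem_singleton_iff] at h
      rw [h]; exact ⟨by norm_num, fun hc => by have := (hB01 hc).2; norm_num at this⟩
    · obtain ⟨m, hm⟩ := mem_iUnion.1 h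
      have hsm : ((1:ℝ)/3)^(m+2) ≤ (1/3:ℝ)^2 := pow3_le (by omega)
      have hps : (0:ℝ) < (1/3:ℝ)^(m+2) := by positivity
      have hkey := pow3 m
      norm_num at hsm
      rcases hm with ⟨ha, hb⟩ | ⟨ha, hb⟩
      · refine ⟨⟨by linarith, by linarith⟩, ?_⟩
        intro hc
        rw [gapB_eq] at hc
        rcases hc with ((hc|hc)|hc)
        · obtain ⟨k, hk1, hk2⟩ := mem_iUnion.1 hc
          rcases lt_or_ge k m with hkm | hkm
          · have h5 : (1/3:ℝ)^(m+1) ≤ (1/3:ℝ)^(k+2) := pow3_le (by omega)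
            linarith
          · have h5 : (1/3:ℝ)^(k+2) ≤ (1/3:ℝ)^(m+2) := pow3_le (by omega)
            linarith
        · obtain ⟨hc1, hc2⟩ := hc
          linarith
        · obtain ⟨k, hk1, hk2⟩ := mem_iUnion.1 hc
          have h2 : ((1:ℝ)/3)^(k+2) ≤ (1/3:ℝ)^2 := pow3_le (by omega)
          norm_num at h2
          linarith
      · refine ⟨⟨by linarith, by linarith⟩, ?_⟩
        intro hc
        rw [gapB_eq] at hc
        rcases hc with ((hc|hc)|hc)
        · obtain ⟨k, hk1, hk2⟩ := mem_iUnion.1 hc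
          have h2 : ((1:ℝ)/3)^(k+2) ≤ (1/3:ℝ)^2 := pow3_le (by omega)
          norm_num at h2
          linarith
        · obtain ⟨hc1, hc2⟩ := hc
          linarith
        · obtain ⟨k, hk1, hk2⟩ := mem_iUnion.1 hc
          rcases lt_or_ge k m with hkm | hkm
          · have h5 : (1/3:ℝ)^(m+1) ≤ (1/3:ℝ)^(k+2) := pow3_le (by omega)
            linarith
          · have h5 : (1/3:ℝ)^(k+2) ≤ (1/3:ℝ)^(m+2) := pow3_le (by omega)
            linarith



noncomputable def pos : List (ℕ × Bool) → ℝ × ℕ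
  | [] => (2/3, 1)
  | (m, b) :: w =>
      if b then ((pos w).1 + (1/3:ℝ)^(pos w).2 - (1/3:ℝ)^((pos w).2+m+1), (pos w).2+m+2)
      else ((pos w).1 + 2*(1/3:ℝ)^((pos w).2+m+2), (pos w).2+m+2)

noncomputable def aW (w : List (ℕ × Bool)) : ℝ := (pos w).1
noncomputable def sW (w : List (ℕ × Bool)) : ℕ := (pos w).2
noncomputable def bW (w : List (ℕ × Bool)) : ℝ := aW w + (1/3:ℝ)^(sW w)
noncomputable def IW (w : List (ℕ × Bool)) : Set ℝ := Icc (aW w) (bW w)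
noncomputable def remW (w : List (ℕ × Bool)) : Set ℝ :=
  (fun y => aW w + (1/3:ℝ)^(sW w) * y) '' gapB

lemma sW_cons (m : ℕ) (b : Bool) (w : List (ℕ × Bool)) : sW ((m,b)::w) = sW w + m + 2 := by
  cases b <;> simp [sW, pos]

lemma aW_cons_false (m : ℕ) (w : List (ℕ × Bool)) :
    aW ((m,false)::w) = aW w + 2*(1/3:ℝ)^(sW w + m + 2) := by simp [aW, sW, pos]

lemma aW_cons_true (m : ℕ) (w : List (ℕ × Bool)) :
    aW ((m,true)::w) = aW w + (1/3:ℝ)^(sW w) - (1/3:ℝ)^(sW w + m + 1) := by simp [aW, sW, pos]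

lemma bW_cons_false (m : ℕ) (w : List (ℕ × Bool)) :
    bW ((m,false)::w) = aW w + 3*(1/3:ℝ)^(sW w + m + 2) := by
  rw [bW, aW_cons_false, sW_cons]; ring

lemma bW_cons_true (m : ℕ) (w : List (ℕ × Bool)) :
    bW ((m,true)::w) = aW w + (1/3:ℝ)^(sW w) - 2*(1/3:ℝ)^(sW w + m + 2) := by
  rw [bW, aW_cons_true, sW_cons, show sW w + m + 1 = (sW w + m + 1) from rfl]
  have := pow3 (sW w + m)
  rw [show sW w + m + 2 = sW w + m + 1 + 1 from rfl] at *
  linarith [pow3 (sW w + m)]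

lemma GP_w (w : List (ℕ × Bool)) : GP (sW w) (aW w) := by
  induction w with
  | nil =>
    have h := GP.d2 GP.zero
    norm_num at h
    exact h
  | cons c w ih =>
    obtain ⟨m, b⟩ := c
    cases b
    · have h := (ih.appzeros (m+1)).app2
      have e : sW w + (m+1) + 1 = sW w + m + 2 := by omega
      rw [e] at h
      rw [aW_cons_false, sW_cons]
      exact h
    · have h := (ih.apptwos (m+1)).app0
      have e : sW w + (m+1) = sW w + m + 1 := by omega
      rw [e] at h
      rw [aW_cons_true, sW_cons]
      exact h

lemma sW_ge (w : List (ℕ × Bool)) : w.length + 1 ≤ sW w := by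
  induction w with
  | nil => simp [sW, pos]
  | cons c w ih => obtain ⟨m, b⟩ := c; rw [sW_cons]; simp; omega

lemma tpos (s : ℕ) : (0:ℝ) < (1/3:ℝ)^s := by positivity

lemma aW_lt_bW (w : List (ℕ × Bool)) : aW w < bW w := by
  have := tpos (sW w); rw [bW]; linarith


lemma image_affine_Icc (c d p q : ℝ) (hd : 0 < d) :
    (fun x => c + d*x) '' Icc p q = Icc (c+d*p) (c+d*q) := by
  ext z
  constructor
  · rintro ⟨y, ⟨h1, h2⟩, rfl⟩
    constructor <;> simp only [] <;> nlinarith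
  · rintro ⟨h1, h2⟩
    refine ⟨(z-c)/d, ⟨?_, ?_⟩, ?_⟩
    · rw [le_div_iff₀ hd]; linarith
    · rw [div_le_iff₀ hd]; linarith
    · field_simp; ring

lemma powE (s m c : ℕ) : (1/3:ℝ)^(s + m + c) = (1/3:ℝ)^s * (1/3:ℝ)^(m+c) := by
  rw [show s + m + c = s + (m + c) from by omega, pow_add]

lemma IW_eq_image (w : List (ℕ × Bool)) :
    IW w = (fun y => aW w + (1/3:ℝ)^(sW w)*y) '' Icc 0 1 := by
  rw [image_affine_Icc _ _ _ _ (tpos (sW w)), IW, bW]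
  norm_num

lemma interval_decomp (w : List (ℕ × Bool)) :
    IW w \ remW w = {aW w, bW w} ∪ ⋃ m : ℕ, (IW ((m,false)::w) ∪ IW ((m,true)::w)) := by
  have ht := tpos (sW w)
  have hinj : Function.Injective (fun y : ℝ => aW w + (1/3:ℝ)^(sW w)*y) := by
    intro u v h
    simp only [add_right_injective] at h
    have : (1/3:ℝ)^(sW w)*u = (1/3:ℝ)^(sW w)*v := by linarith [h]
    exact mul_left_cancel₀ (ne_of_gt ht) this
  rw [IW_eq_image, remW, ← image_diff hinj, unit_decomp, image_union, image_iUnion]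
  congr 1
  · rw [show ({0,1} : Set ℝ) = insert 0 {1} from rfl, image_insert_eq, image_singleton]
    norm_num [bW]
  · apply iUnion_congr; intro m
    rw [image_union]
    congr 1
    · rw [leftI, image_affine_Icc _ _ _ _ ht, IW, aW_cons_false, bW_cons_false]
      rw [powE (sW w) m 2]
      congr 1 <;> ring
    · rw [rightI, image_affine_Icc _ _ _ _ ht, IW, aW_cons_true, bW_cons_true]
      rw [powE (sW w) m 2, powE (sW w) m 1, pow3 m]
      congr 1 <;> ring

lemma remW_sub_Ioo (w : List (ℕ × Bool)) : remW w ⊆ Ioo (aW w) (bW w) := by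
  rintro z ⟨y, hy, rfl⟩
  obtain ⟨h0, h1⟩ := gapB_sub hy
  have ht := tpos (sW w)
  constructor
  · simp only; nlinarith
  · simp only [bW]; nlinarith

lemma mem_remW {w : List (ℕ × Bool)} {p q z : ℝ} (hpq : Ioo p q ⊆ gapB)
    (h1 : aW w + (1/3:ℝ)^(sW w) * p < z) (h2 : z < aW w + (1/3:ℝ)^(sW w) * q) :
    z ∈ remW w := by
  have ht := tpos (sW w)
  refine ⟨(z - aW w) / (1/3:ℝ)^(sW w), hpq ⟨?_, ?_⟩, ?_⟩
  · rw [lt_div_iff₀ ht]; linarith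
  · rw [div_lt_iff₀ ht]; linarith
  · simp only; field_simp; ring

lemma comp_eq_Icc {S : Set ℝ} {a b x : ℝ} (hab : a ≤ b) (hx : x ∈ Icc a b) (hsub : Icc a b ⊆ S)
    (hup : ∀ y ∈ S, b < y → ∃ z, z ∉ S ∧ b < z ∧ z < y)
    (hdown : ∀ y ∈ S, y < a → ∃ z, z ∉ S ∧ y < z ∧ z < a) :
    connectedComponentIn S x = Icc a b := by
  have hsub2 : Icc a b ⊆ connectedComponentIn S x :=
    (isPreconnected_Icc).subset_connectedComponentIn hx hsub
  apply Subset.antisymm _ hsub2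
  intro y hy
  have hC := (isPreconnected_connectedComponentIn (x := x) (F := S)).ordConnected
  have hyS : y ∈ S := connectedComponentIn_subset S x hy
  by_contra hyI
  rw [mem_Icc] at hyI; push_neg at hyI
  rcases le_or_gt a y with h1 | h1
  · have hby : b < y := hyI h1
    obtain ⟨z, hz, hz1, hz2⟩ := hup y hyS hby
    have : z ∈ connectedComponentIn S x :=
      hC.out (hsub2 (right_mem_Icc.2 hab)) hy ⟨le_of_lt hz1, le_of_lt hz2⟩
    exact hz (connectedComponentIn_subset S x this)
  · obtain ⟨z, hz, hz1, hz2⟩ := hdown y hyS h1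
    have : z ∈ connectedComponentIn S x :=
      hC.out hy (hsub2 (left_mem_Icc.2 hab)) ⟨le_of_lt hz1, le_of_lt hz2⟩
    exact hz (connectedComponentIn_subset S x this)

lemma gapAbove (m : ℕ) (b : Bool) (w : List (ℕ × Bool)) :
    ∃ c, bW ((m,b)::w) < c ∧ Ioo (bW ((m,b)::w)) c ⊆ remW w := by
  have ht := tpos (sW w)
  have htm2 := tpos (sW w + m + 2)
  cases b
  · -- left child : gap ((1/3)^(m+1), 2*(1/3)^(m+1))
    have e : aW w + (1/3:ℝ)^(sW w) * ((1/3:ℝ)^(m+1)) = bW ((m,false)::w) := by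
      rw [bW_cons_false, ← powE (sW w) m 1, pow3 (sW w + m)]
    have e2 : aW w + (1/3:ℝ)^(sW w) * (2*(1/3:ℝ)^(m+1)) = aW w + 2*(1/3:ℝ)^(sW w+m+1) := by
      rw [powE (sW w) m 1]; ring
    refine ⟨aW w + 2*(1/3:ℝ)^(sW w+m+1), ?_, ?_⟩
    · rw [bW_cons_false, pow3 (sW w + m)]
      linarith
    · rintro z ⟨hz1, hz2⟩
      exact mem_remW (gapB_left (show 1 ≤ m+1 by omega))
        (by rw [e]; exact hz1) (by rw [e2]; exact hz2)
  · -- right child : gap (1-2*(1/3)^(m+2), 1-(1/3)^(m+2))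
    have e : aW w + (1/3:ℝ)^(sW w) * (1-2*(1/3:ℝ)^(m+2)) = bW ((m,true)::w) := by
      rw [bW_cons_true, powE (sW w) m 2]; ring
    have e2 : aW w + (1/3:ℝ)^(sW w) * (1-(1/3:ℝ)^(m+2))
        = aW w + (1/3:ℝ)^(sW w) - (1/3:ℝ)^(sW w + m + 2) := by
      rw [powE (sW w) m 2]; ring
    refine ⟨aW w + (1/3:ℝ)^(sW w) - (1/3:ℝ)^(sW w + m + 2), ?_, ?_⟩
    · rw [bW_cons_true]
      linarith
    · rintro z ⟨hz1, hz2⟩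
      exact mem_remW (gapB_right (show 1 ≤ m+2 by omega))
        (by rw [e]; exact hz1) (by rw [e2]; exact hz2)

lemma gapBelow (m : ℕ) (b : Bool) (w : List (ℕ × Bool)) :
    ∃ c, c < aW ((m,b)::w) ∧ Ioo c (aW ((m,b)::w)) ⊆ remW w := by
  have ht := tpos (sW w)
  have htm2 := tpos (sW w + m + 2)
  cases b
  · -- left child : gap ((1/3)^(m+2), 2*(1/3)^(m+2))
    have e : aW w + (1/3:ℝ)^(sW w) * ((1/3:ℝ)^(m+2)) = aW w + (1/3:ℝ)^(sW w+m+2) := by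
      rw [powE (sW w) m 2]
    have e2 : aW w + (1/3:ℝ)^(sW w) * (2*(1/3:ℝ)^(m+2)) = aW ((m,false)::w) := by
      rw [aW_cons_false, powE (sW w) m 2]; ring
    refine ⟨aW w + (1/3:ℝ)^(sW w+m+2), ?_, ?_⟩
    · rw [aW_cons_false]; linarith
    · rintro z ⟨hz1, hz2⟩
      exact mem_remW (gapB_left (show 1 ≤ m+2 by omega))
        (by rw [e]; exact hz1) (by rw [e2]; exact hz2)
  · -- right child : gap (1-2*(1/3)^(m+1), 1-(1/3)^(m+1))
    have e : aW w + (1/3:ℝ)^(sW w) * (1-2*(1/3:ℝ)^(m+1)) = aW w + (1/3:ℝ)^(sW w) - 2*(1/3:ℝ)^(sW w+m+1) := by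
      rw [powE (sW w) m 1]; ring
    have e2 : aW w + (1/3:ℝ)^(sW w) * (1-(1/3:ℝ)^(m+1)) = aW ((m,true)::w) := by
      rw [aW_cons_true, powE (sW w) m 1]; ring
    refine ⟨aW w + (1/3:ℝ)^(sW w) - 2*(1/3:ℝ)^(sW w+m+1), ?_, ?_⟩
    · rw [aW_cons_true, pow3 (sW w + m)]
      have := tpos (sW w + m + 1)
      linarith
    · rintro z ⟨hz1, hz2⟩
      exact mem_remW (gapB_right (show 1 ≤ m+1 by omega))
        (by rw [e]; exact hz1) (by rw [e2]; exact hz2)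

lemma gapAccA (w : List (ℕ × Bool)) (m : ℕ) :
    Ioo (aW w + (1/3:ℝ)^(sW w + m + 2)) (aW w + 2*(1/3:ℝ)^(sW w+m+2)) ⊆ remW w := by
  rintro z ⟨hz1, hz2⟩
  have e : aW w + (1/3:ℝ)^(sW w) * ((1/3:ℝ)^(m+2)) = aW w + (1/3:ℝ)^(sW w+m+2) := by
    rw [powE (sW w) m 2]
  have e2 : aW w + (1/3:ℝ)^(sW w) * (2*(1/3:ℝ)^(m+2)) = aW w + 2*(1/3:ℝ)^(sW w+m+2) := by
    rw [powE (sW w) m 2]; ring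
  exact mem_remW (gapB_left (show 1 ≤ m+2 by omega))
    (by rw [e]; exact hz1) (by rw [e2]; exact hz2)

lemma gapAccB (w : List (ℕ × Bool)) (m : ℕ) :
    Ioo (bW w - 2*(1/3:ℝ)^(sW w+m+1)) (bW w - (1/3:ℝ)^(sW w+m+1)) ⊆ remW w := by
  rintro z ⟨hz1, hz2⟩
  have e : aW w + (1/3:ℝ)^(sW w) * (1-2*(1/3:ℝ)^(m+1)) = bW w - 2*(1/3:ℝ)^(sW w+m+1) := by
    rw [powE (sW w) m 1, bW]; ring
  have e2 : aW w + (1/3:ℝ)^(sW w) * (1-(1/3:ℝ)^(m+1)) = bW w - (1/3:ℝ)^(sW w+m+1) := by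
    rw [powE (sW w) m 1, bW]; ring
  exact mem_remW (gapB_right (show 1 ≤ m+1 by omega))
    (by rw [e]; exact hz1) (by rw [e2]; exact hz2)

lemma aW_nil : aW [] = 2/3 := rfl
lemma sW_nil : sW [] = 1 := rfl
lemma bW_nil : bW ([] : List (ℕ × Bool)) = 1 := by rw [bW, aW_nil, sW_nil]; norm_num

noncomputable def Ept (n : ℕ) : Set ℝ :=
  ⋃ w ∈ {w : List (ℕ × Bool) | w.length < n}, ({aW w, bW w} : Set ℝ)
noncomputable def Uni (n : ℕ) : Set ℝ := ⋃ w ∈ {w : List (ℕ × Bool) | w.length = n}, IW w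
noncomputable def RS (n : ℕ) : Set ℝ := ⋃ w ∈ {w : List (ℕ × Bool) | w.length = n}, remW w

lemma mem_Ept {n : ℕ} {x : ℝ} :
    x ∈ Ept n ↔ ∃ w : List (ℕ × Bool), w.length < n ∧ (x = aW w ∨ x = bW w) := by
  simp [Ept]

lemma mem_Uni {n : ℕ} {x : ℝ} :
    x ∈ Uni n ↔ ∃ w : List (ℕ × Bool), w.length = n ∧ x ∈ IW w := by
  simp [Uni]

lemma mem_RS {n : ℕ} {x : ℝ} :
    x ∈ RS n ↔ ∃ w : List (ℕ × Bool), w.length = n ∧ x ∈ remW w := by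
  simp [RS]

lemma fastD_succ (n : ℕ) :
    fastD (n+1) = fastD n \ ⋃ I ∈ compsE (fastD n), affI I '' gapB := rfl

lemma fastD_anti {m n : ℕ} (h : m ≤ n) : fastD n ⊆ fastD m := by
  induction h with
  | refl => exact subset_rfl
  | @step k h ih =>
    have h1 : fastD (k+1) ⊆ fastD k := by rw [fastD_succ]; exact diff_subset
    exact h1.trans ih

lemma fastD_zero : fastD 0 = Icc (2/3) 1 := rfl

lemma fastD_sub_base (n : ℕ) : fastD n ⊆ Icc (2/3) 1 := fastD_anti (Nat.zero_le n)

def Hyp (n : ℕ) : Prop := fastD n = Ept n ∪ Uni n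
def HistH (n : ℕ) : Prop := ∀ j, j < n → fastD (j+1) = fastD j \ RS j

lemma remW_not_in_fastD {n : ℕ} (hist : HistH n) {j : ℕ} (hj : j < n)
    {w : List (ℕ × Bool)} (hw : w.length = j) {x : ℝ} (hx : x ∈ fastD n) : x ∉ remW w := by
  intro hxw
  have h1 : x ∈ fastD (j+1) := fastD_anti (by omega) hx
  rw [hist j hj] at h1
  exact h1.2 (mem_RS.2 ⟨w, hw, hxw⟩)

lemma hup_of_gap {S : Set ℝ} {b c : ℝ} (hbc : b < c) (hgap : ∀ z, b < z → z < c → z ∉ S) :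
    ∀ y ∈ S, b < y → ∃ z, z ∉ S ∧ b < z ∧ z < y := by
  intro y hy hby
  refine ⟨min ((b+c)/2) ((b+y)/2), ?_, ?_, ?_⟩
  · apply hgap
    · apply lt_min <;> linarith
    · exact (min_le_left _ _).trans_lt (by linarith)
  · apply lt_min <;> linarith
  · exact (min_le_right _ _).trans_lt (by linarith)

lemma hdown_of_gap {S : Set ℝ} {a c : ℝ} (hc : c < a) (hgap : ∀ z, c < z → z < a → z ∉ S) :
    ∀ y ∈ S, y < a → ∃ z, z ∉ S ∧ y < z ∧ z < a := by
  intro y hy hya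
  refine ⟨max ((a+c)/2) ((a+y)/2), ?_, ?_, ?_⟩
  · apply hgap
    · exact lt_of_lt_of_le (by linarith) (le_max_left _ _)
    · apply max_lt <;> linarith
  · exact lt_of_lt_of_le (by linarith) (le_max_right _ _)
  · apply max_lt <;> linarith

lemma IW_sub_fastD {n : ℕ} (hA : Hyp n) {w : List (ℕ × Bool)} (hw : w.length = n) :
    IW w ⊆ fastD n := by
  intro y hy
  rw [hA]
  exact Or.inr (mem_Uni.2 ⟨w, hw, hy⟩)

lemma compU {n : ℕ} (hA : Hyp n) (hist : HistH n) {w : List (ℕ × Bool)} (hw : w.length = n)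
    {x : ℝ} (hx : x ∈ IW w) : connectedComponentIn (fastD n) x = IW w := by
  apply comp_eq_Icc (aW_lt_bW w).le hx (IW_sub_fastD hA hw)
  · -- up
    cases n with
    | zero =>
      intro y hy hby
      exfalso
      have hw0 : w = [] := List.length_eq_zero_iff.1 hw
      rw [hw0, bW_nil] at hby
      have := (fastD_sub_base 0 hy).2
      linarith
    | succ k =>
      obtain ⟨⟨m, bb⟩, w', rfl⟩ : ∃ c w', w = c :: w' := by
        cases w with
        | nil => simp at hw
        | cons c w' => exact ⟨c, w', rfl⟩
      have hw' : w'.length = k := by simp at hw; omega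
      obtain ⟨c, hc1, hc2⟩ := gapAbove m bb w'
      exact hup_of_gap hc1 (fun z h1 h2 hzS =>
        remW_not_in_fastD hist (Nat.lt_succ_self k) hw' hzS (hc2 ⟨h1, h2⟩))
  · -- down
    cases n with
    | zero =>
      intro y hy hya
      exfalso
      have hw0 : w = [] := List.length_eq_zero_iff.1 hw
      rw [hw0, aW_nil] at hya
      have := (fastD_sub_base 0 hy).1
      linarith
    | succ k =>
      obtain ⟨⟨m, bb⟩, w', rfl⟩ : ∃ c w', w = c :: w' := by
        cases w with
        | nil => simp at hw
        | cons c w' => exact ⟨c, w', rfl⟩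
      have hw' : w'.length = k := by simp at hw; omega
      obtain ⟨c, hc1, hc2⟩ := gapBelow m bb w'
      exact hdown_of_gap hc1 (fun z h1 h2 hzS =>
        remW_not_in_fastD hist (Nat.lt_succ_self k) hw' hzS (hc2 ⟨h1, h2⟩))

lemma compEa {n : ℕ} (hA : Hyp n) (hist : HistH n) {v : List (ℕ × Bool)} (hv : v.length < n)
    (hxS : aW v ∈ fastD n) : connectedComponentIn (fastD n) (aW v) = {aW v} := by
  rw [← Icc_self]
  apply comp_eq_Icc le_rfl ⟨le_rfl, le_rfl⟩
    (by intro y hy; rw [Icc_self, mem_singleton_iff] at hy; rw [hy]; exact hxS)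
  · -- up : accumulating gaps
    intro y hy hby
    have hpos2 : (0:ℝ) < 2*(1/3:ℝ)^(sW v + 2) := by positivity
    have hypos : (0:ℝ) < y - aW v := by linarith
    obtain ⟨m, hm⟩ := exists_pow_lt_of_lt_one (div_pos hypos hpos2)
      (show (1/3:ℝ) < 1 by norm_num)
    rw [lt_div_iff₀ hpos2] at hm
    have hE : (1/3:ℝ)^(sW v + m + 2) = (1/3:ℝ)^m * (1/3:ℝ)^(sW v + 2) := by
      rw [show sW v + m + 2 = m + (sW v + 2) from by omega, pow_add]
    have hlt : 2*(1/3:ℝ)^(sW v + m + 2) < y - aW v := by rw [hE]; linarith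
    have htm := tpos (sW v + m + 2)
    refine ⟨aW v + (3/2)*(1/3:ℝ)^(sW v + m + 2), ?_, by linarith, by linarith⟩
    intro hzS
    exact remW_not_in_fastD hist hv rfl hzS
      (gapAccA v m ⟨by linarith, by linarith⟩)
  · -- down : adjacent gap or base
    cases v with
    | nil =>
      intro y hy hya
      exfalso
      rw [aW_nil] at hya
      have := (fastD_sub_base n hy).1
      linarith
    | cons c v' =>
      obtain ⟨m, bb⟩ := c
      have hv' : v'.length < n := by simp at hv; omega
      obtain ⟨c', hc1, hc2⟩ := gapBelow m bb v'
      exact hdown_of_gap hc1 (fun z h1 h2 hzS =>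
        remW_not_in_fastD hist hv' rfl hzS (hc2 ⟨h1, h2⟩))

lemma compEb {n : ℕ} (hA : Hyp n) (hist : HistH n) {v : List (ℕ × Bool)} (hv : v.length < n)
    (hxS : bW v ∈ fastD n) : connectedComponentIn (fastD n) (bW v) = {bW v} := by
  rw [← Icc_self]
  apply comp_eq_Icc le_rfl ⟨le_rfl, le_rfl⟩
    (by intro y hy; rw [Icc_self, mem_singleton_iff] at hy; rw [hy]; exact hxS)
  · -- up : adjacent gap or base
    cases v with
    | nil =>
      intro y hy hby
      exfalso
      rw [bW_nil] at hby
      have := (fastD_sub_base n hy).2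
      linarith
    | cons c v' =>
      obtain ⟨m, bb⟩ := c
      have hv' : v'.length < n := by simp at hv; omega
      obtain ⟨c', hc1, hc2⟩ := gapAbove m bb v'
      exact hup_of_gap hc1 (fun z h1 h2 hzS =>
        remW_not_in_fastD hist hv' rfl hzS (hc2 ⟨h1, h2⟩))
  · -- down : accumulating gaps
    intro y hy hya
    have hpos2 : (0:ℝ) < 2*(1/3:ℝ)^(sW v + 1) := by positivity
    have hypos : (0:ℝ) < bW v - y := by linarith
    obtain ⟨m, hm⟩ := exists_pow_lt_of_lt_one (div_pos hypos hpos2)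
      (show (1/3:ℝ) < 1 by norm_num)
    rw [lt_div_iff₀ hpos2] at hm
    have hE : (1/3:ℝ)^(sW v + m + 1) = (1/3:ℝ)^m * (1/3:ℝ)^(sW v + 1) := by
      rw [show sW v + m + 1 = m + (sW v + 1) from by omega, pow_add]
    have hlt : 2*(1/3:ℝ)^(sW v + m + 1) < bW v - y := by rw [hE]; linarith
    have htm := tpos (sW v + m + 1)
    refine ⟨bW v - (3/2)*(1/3:ℝ)^(sW v + m + 1), ?_, by linarith, by linarith⟩
    intro hzS
    exact remW_not_in_fastD hist hv rfl hzS
      (gapAccB v m ⟨by linarith, by linarith⟩)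

lemma comps_eq {n : ℕ} (hA : Hyp n) (hist : HistH n) :
    compsE (fastD n) = (fun w => IW w) '' {w : List (ℕ × Bool) | w.length = n} := by
  ext I
  constructor
  · rintro ⟨⟨x, hxS, rfl⟩, hint⟩
    have hx2 := hxS
    rw [hA] at hx2
    rcases hx2 with hE | hU
    · exfalso
      obtain ⟨v, hv, hx⟩ := mem_Ept.1 hE
      rcases hx with rfl | rfl
      · rw [compEa hA hist hv hxS, ← Icc_self, interior_Icc, Ioo_self] at hint
        exact Set.not_nonempty_empty hint
      · rw [compEb hA hist hv hxS, ← Icc_self, interior_Icc, Ioo_self] at hint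
        exact Set.not_nonempty_empty hint
    · obtain ⟨w, hw, hxI⟩ := mem_Uni.1 hU
      exact ⟨w, hw, (compU hA hist hw hxI).symm⟩
  · rintro ⟨w, hw, rfl⟩
    have hmem : aW w ∈ IW w := left_mem_Icc.2 (aW_lt_bW w).le
    refine ⟨⟨aW w, IW_sub_fastD hA hw hmem, (compU hA hist hw hmem).symm⟩, ?_⟩
    show (interior (IW w)).Nonempty
    rw [show IW w = Icc (aW w) (bW w) from rfl, interior_Icc]
    exact nonempty_Ioo.2 (aW_lt_bW w)

lemma affI_IW (w : List (ℕ × Bool)) :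
    affI (IW w) = fun y => aW w + (1/3:ℝ)^(sW w) * y := by
  funext y
  rw [affI, IW, csInf_Icc (aW_lt_bW w).le, csSup_Icc (aW_lt_bW w).le, bW]
  ring

lemma step_eq {n : ℕ} (hA : Hyp n) (hist : HistH n) : fastD (n+1) = fastD n \ RS n := by
  rw [fastD_succ, comps_eq hA hist, biUnion_image]
  congr 1
  unfold RS
  apply iUnion_congr; intro w
  apply iUnion_congr; intro hw
  rw [affI_IW, remW]

lemma Icc_inj {a b c d : ℝ} (hab : a < b) (h : Icc a b = Icc c d) : a = c ∧ b = d := by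
  have hcd : c ≤ d := by
    by_contra hc
    push_neg at hc
    rw [Icc_eq_empty_of_lt hc] at h
    have : a ∈ (∅ : Set ℝ) := h ▸ left_mem_Icc.2 hab.le
    exact this
  have h1 : a ∈ Icc c d := h ▸ left_mem_Icc.2 hab.le
  have h2 : b ∈ Icc c d := h ▸ right_mem_Icc.2 hab.le
  have h3 : c ∈ Icc a b := h.symm ▸ left_mem_Icc.2 hcd
  have h4 : d ∈ Icc a b := h.symm ▸ right_mem_Icc.2 hcd
  constructor <;> [linarith [h1.1, h3.1]; linarith [h2.2, h4.2]]

lemma IW_eq_imp {w u : List (ℕ × Bool)} (h : IW w = IW u) : remW w = remW u := by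
  obtain ⟨hae, hbe⟩ := Icc_inj (aW_lt_bW w) h
  have e1 : (1/3:ℝ)^(sW w) = bW w - aW w := by rw [bW]; ring
  have e2 : (1/3:ℝ)^(sW u) = bW u - aW u := by rw [bW]; ring
  rw [remW, remW, e1, e2, hae, hbe]

lemma hyp_succ {n : ℕ} (hA : Hyp n) (hist : HistH n) : Hyp (n+1) := by
  have hstep := step_eq hA hist
  unfold Hyp
  rw [hstep, hA]
  ext x
  constructor
  · rintro ⟨hx, hR⟩
    rcases hx with hE | hU
    · left
      obtain ⟨v, hv, hxv⟩ := mem_Ept.1 hE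
      exact mem_Ept.2 ⟨v, by omega, hxv⟩
    · obtain ⟨w, hw, hxI⟩ := mem_Uni.1 hU
      have hxr : x ∉ remW w := fun hc => hR (mem_RS.2 ⟨w, hw, hc⟩)
      have hmem : x ∈ IW w \ remW w := ⟨hxI, hxr⟩
      rw [interval_decomp] at hmem
      rcases hmem with hend | hch
      · left
        rcases hend with h | h
        · exact mem_Ept.2 ⟨w, by omega, Or.inl h⟩
        · rw [mem_singleton_iff] at h
          exact mem_Ept.2 ⟨w, by omega, Or.inr h⟩
      · right
        obtain ⟨m, hm⟩ := mem_iUnion.1 hch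
        rcases hm with h | h
        · exact mem_Uni.2 ⟨(m,false)::w, by simp [hw], h⟩
        · exact mem_Uni.2 ⟨(m,true)::w, by simp [hw], h⟩
  · intro hx
    rcases hx with hE | hU
    · obtain ⟨v, hv, hxv⟩ := mem_Ept.1 hE
      rcases Nat.lt_succ_iff_lt_or_eq.1 hv with hvn | hvn
      · have hxE : x ∈ Ept n := mem_Ept.2 ⟨v, hvn, hxv⟩
        have hxS : x ∈ fastD n := by rw [hA]; exact Or.inl hxE
        refine ⟨Or.inl hxE, ?_⟩
        intro hR
        obtain ⟨w, hw, hxw⟩ := mem_RS.1 hR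
        have hxI : x ∈ IW w := Ioo_subset_Icc_self (remW_sub_Ioo w hxw)
        have h1 := compU hA hist hw hxI
        have h2 : connectedComponentIn (fastD n) x = {x} := by
          rcases hxv with rfl | rfl
          · exact compEa hA hist hvn hxS
          · exact compEb hA hist hvn hxS
        rw [h2] at h1
        have ha : aW w ∈ ({x} : Set ℝ) := h1 ▸ left_mem_Icc.2 (aW_lt_bW w).le
        have hb : bW w ∈ ({x} : Set ℝ) := h1 ▸ right_mem_Icc.2 (aW_lt_bW w).le
        rw [mem_singleton_iff] at ha hb
        have := aW_lt_bW w
        rw [ha, hb] at this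
        exact lt_irrefl _ this
      · have hxI : x ∈ IW v := by
          rcases hxv with rfl | rfl
          · exact left_mem_Icc.2 (aW_lt_bW v).le
          · exact right_mem_Icc.2 (aW_lt_bW v).le
        refine ⟨Or.inr (mem_Uni.2 ⟨v, hvn, hxI⟩), ?_⟩
        intro hR
        obtain ⟨w, hw, hxw⟩ := mem_RS.1 hR
        have hxIw : x ∈ IW w := Ioo_subset_Icc_self (remW_sub_Ioo w hxw)
        have h1 := compU hA hist hw hxIw
        have h2 := compU hA hist hvn hxI
        rw [h2] at h1
        have hre := IW_eq_imp h1
        have hxw' : x ∈ remW v := hre ▸ hxw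
        have hIoo := remW_sub_Ioo v hxw'
        rcases hxv with rfl | rfl
        · exact lt_irrefl _ hIoo.1
        · exact lt_irrefl _ hIoo.2
    · obtain ⟨w, hw, hxI⟩ := mem_Uni.1 hU
      obtain ⟨⟨m, bb⟩, w', rfl⟩ : ∃ c w', w = c :: w' := by
        cases w with
        | nil => simp at hw
        | cons c w' => exact ⟨c, w', rfl⟩
      have hw' : w'.length = n := by simp at hw; omega
      have hchild : x ∈ IW w' \ remW w' := by
        rw [interval_decomp w']
        right
        refine mem_iUnion.2 ⟨m, ?_⟩
        cases bb
        · exact Or.inl hxI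
        · exact Or.inr hxI
      refine ⟨Or.inr (mem_Uni.2 ⟨w', hw', hchild.1⟩), ?_⟩
      intro hR
      obtain ⟨u, hu, hxu⟩ := mem_RS.1 hR
      have hxIu : x ∈ IW u := Ioo_subset_Icc_self (remW_sub_Ioo u hxu)
      have h1 := compU hA hist hu hxIu
      have h2 := compU hA hist hw' hchild.1
      rw [h2] at h1
      have hre := IW_eq_imp h1
      exact hchild.2 (hre ▸ hxu)

theorem master : ∀ n : ℕ, Hyp n ∧ HistH n := by
  intro n
  induction n with
  | zero =>
    constructor
    · unfold Hyp
      have e1 : Ept 0 = ∅ := by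
        ext x; rw [mem_Ept]; simp
      have e2 : Uni 0 = IW [] := by
        apply Subset.antisymm
        · intro x hx
          obtain ⟨w, hw, h⟩ := mem_Uni.1 hx
          rwa [List.length_eq_zero_iff.1 hw] at h
        · intro x hx
          exact mem_Uni.2 ⟨[], rfl, hx⟩
      rw [e1, e2, empty_union, fastD_zero, IW, aW_nil, bW_nil]
    · intro j hj; omega
  | succ n ih =>
    obtain ⟨hA, hist⟩ := ih
    have hstep := step_eq hA hist
    refine ⟨hyp_succ hA hist, ?_⟩
    intro j hj
    rcases Nat.lt_succ_iff_lt_or_eq.1 hj with h | h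
    · exact hist j h
    · subst h; exact hstep

lemma K_gapB {x : ℝ} (hx : x ∈ cantorK) : x ∉ gapB := by
  rw [gapB_eq]
  rintro ((h|h)|h)
  · obtain ⟨k, hk⟩ := mem_iUnion.1 h
    exact not_left_gap hx (k+2) (by omega) ⟨hk.1, hk.2⟩
  · refine not_left_gap hx 1 le_rfl ⟨?_, ?_⟩
    · rw [pow_one]; exact h.1
    · rw [pow_one]; have := h.2; linarith
  · obtain ⟨k, hk⟩ := mem_iUnion.1 h
    exact not_right_gap hx (k+2) (by omega) ⟨hk.1, hk.2⟩

lemma K_in_fastD (n : ℕ) : cantorK ∩ Icc (2/3) 1 ⊆ fastD n := by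
  induction n with
  | zero => rw [fastD_zero]; exact inter_subset_right
  | succ n ih =>
    intro x hx
    obtain ⟨hA, hist⟩ := master n
    rw [step_eq hA hist]
    refine ⟨ih hx, ?_⟩
    intro hR
    obtain ⟨w, hw, hxw⟩ := mem_RS.1 hR
    obtain ⟨y, hyB, hxy⟩ := hxw
    obtain ⟨hy0, hy1⟩ := gapB_sub hyB
    have ht := tpos (sW w)
    have hxI : x ∈ Icc (aW w) (aW w + (1/3:ℝ)^(sW w)) := by
      constructor
      · rw [← hxy]; nlinarith
      · rw [← hxy]; nlinarith
    have hxK : x ∈ cantorK ∩ Icc (aW w) (aW w + (1/3:ℝ)^(sW w)) := ⟨hx.1, hxI⟩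
    rw [(GP_w w).interval] at hxK
    obtain ⟨z, hzK, hzx⟩ := hxK
    have hxy' : aW w + (1/3:ℝ)^(sW w) * y = x := hxy
    have hzx' : aW w + (1/3:ℝ)^(sW w) * z = x := hzx
    have : y = z := by
      have h1 : aW w + (1/3:ℝ)^(sW w) * y = aW w + (1/3:ℝ)^(sW w) * z := by
        rw [hxy', hzx']
      have h2 : (1/3:ℝ)^(sW w) * y = (1/3:ℝ)^(sW w) * z := by linarith
      exact mul_left_cancel₀ (ne_of_gt ht) h2
    exact K_gapB (this ▸ hzK) hyB

lemma fastD_in : (⋂ n : ℕ, fastD n) ⊆ cantorK ∩ Icc (2/3) 1 := by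
  intro x hx
  have hx0 : x ∈ Icc (2/3:ℝ) 1 := by
    have := mem_iInter.1 hx 0
    rwa [fastD_zero] at this
  refine ⟨?_, hx0⟩
  have key : ∀ n : ℕ, ∃ y ∈ cantorK, |x - y| ≤ (1/3:ℝ)^(n+1) := by
    intro n
    have hxn := mem_iInter.1 hx n
    obtain ⟨hA, _⟩ := master n
    rw [hA] at hxn
    have htp := tpos (n+1)
    rcases hxn with hE | hU
    · obtain ⟨v, hv, h | h⟩ := mem_Ept.1 hE
      · exact ⟨aW v, (GP_w v).left_mem, by rw [h]; simp only [sub_self, abs_zero]; positivity⟩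
      · exact ⟨bW v, by rw [show bW v = aW v + (1/3:ℝ)^(sW v) from rfl]; exact (GP_w v).right_mem,
          by rw [h]; simp only [sub_self, abs_zero]; positivity⟩
    · obtain ⟨w, hw, h1, h2⟩ := mem_Uni.1 hU
      refine ⟨aW w, (GP_w w).left_mem, ?_⟩
      have hsw : n+1 ≤ sW w := by have := sW_ge w; omega
      have hb : x ≤ aW w + (1/3:ℝ)^(sW w) := h2
      have habs : |x - aW w| ≤ (1/3:ℝ)^(sW w) := by
        rw [abs_le]
        constructor
        · have := tpos (sW w); linarith
        · linarith
      exact habs.trans (pow3_le hsw)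
  rw [← cantorK_closed.closure_eq]
  rw [Metric.mem_closure_iff]
  intro ε hε
  obtain ⟨n, hn⟩ := exists_pow_lt_of_lt_one hε (show (1/3:ℝ) < 1 by norm_num)
  obtain ⟨y, hy, hxy⟩ := key n
  refine ⟨y, hy, ?_⟩
  rw [Real.dist_eq]
  have : ((1:ℝ)/3)^(n+1) ≤ (1/3:ℝ)^n := pow3_le (by omega)
  calc |x - y| ≤ (1/3:ℝ)^(n+1) := hxy
  _ ≤ (1/3:ℝ)^n := this
  _ < ε := hn


end CW

theorem stmt7 : ⋂ n : ℕ, fastD n = cantorK ∩ Icc (2/3) 1 := by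
  apply Set.Subset.antisymm CW.fastD_in
  intro x hx
  exact Set.mem_iInter.2 (fun n => CW.K_in_fastD n hx)
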